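/- For a loxodromic Möbius transformation f with translation length t(f) ≥ 0 and rotation angle θ(f) ∈ (−π, π], where β(f) = 4 sinh²((t(f) + iθ(f))/2), one has cosh(t(f)) = (|β(f)+4| + |β(f)|)/4. -/

import Mathlib

open Complex

theorem stmt1 (t θ : ℝ) (ht : 0 ≤ t) (hθ1 : -Real.pi < θ) (hθ2 : θ ≤ Real.pi)
    (β : ℂ) (hβ : β = 4 * (Complex.sinh ((t + θ * Complex.I) / 2)) ^ 2) :
    Real.cosh t = (‖β + 4‖ + ‖β‖) / 4 := by
  set z : ℂ := ((t : ℂ) + θ * Complex.I) / 2 with hzdef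
  have hz : z = (↑(t/2) : ℂ) + (↑(θ/2) : ℝ) * Complex.I := by
    rw [hzdef]; push_cast; ring
  have hs : Complex.sinh z =
      (↑(Real.sinh (t/2) * Real.cos (θ/2)) : ℂ) +
      (↑(Real.cosh (t/2) * Real.sin (θ/2)) : ℝ) * Complex.I := by
    rw [hz, Complex.sinh_add, Complex.sinh_mul_I, Complex.cosh_mul_I]
    push_cast
    ring
  have hc : Complex.cosh z =
      (↑(Real.cosh (t/2) * Real.cos (θ/2)) : ℂ) +
      (↑(Real.sinh (t/2) * Real.sin (θ/2)) : ℝ) * Complex.I := by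
    rw [hz, Complex.cosh_add, Complex.sinh_mul_I, Complex.cosh_mul_I]
    push_cast
    ring
  have hβ4 : β + 4 = 4 * (Complex.cosh z) ^ 2 := by
    have := Complex.cosh_sq_sub_sinh_sq z
    rw [hβ]; linear_combination -4 * this
  have habsβ : ‖β‖ = 4 * Complex.normSq (Complex.sinh z) := by
    rw [hβ, norm_mul, norm_pow, ← Complex.sq_norm]
    simp
  have habsβ4 : ‖β + 4‖ = 4 * Complex.normSq (Complex.cosh z) := by
    rw [hβ4, norm_mul, norm_pow, ← Complex.sq_norm]
    simp
  rw [habsβ, habsβ4, hs, hc]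
  rw [Complex.normSq_add_mul_I, Complex.normSq_add_mul_I]
  have h1 : Real.sin (θ/2) ^ 2 + Real.cos (θ/2) ^ 2 = 1 := Real.sin_sq_add_cos_sq _
  have h2 : Real.cosh (t/2) ^ 2 - Real.sinh (t/2) ^ 2 = 1 := Real.cosh_sq_sub_sinh_sq _
  have h3 : Real.cosh t = 2 * Real.cosh (t/2) ^ 2 - 1 := by
    have := Real.cosh_two_mul (t/2)
    rw [show 2 * (t/2) = t by ring] at this
    rw [this, Real.cosh_sq]; ring
  nlinarith [h1, h2, h3]
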